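/- For every integer d ≥ 5, every prime p with p ≥ d − 1, and all (x,y) ∈ ℤ² with L(x,y) ≠ 0, where L(X,Y) = (X − pY)·X·∏_{n=1}^{d−2}(X − nY), one has max{|x|, |y|} ≤ 9·|L(x,y)|^{1/(d−1)}. -/

import Mathlib

open Finset

set_option maxHeartbeats 1000000


private def Dodd : ℕ → ℕ := fun n => ∏ i ∈ Finset.range n, (2*i+1)

private lemma Dodd_succ (n : ℕ) : Dodd (n+1) = Dodd n * (2*n+1) := Finset.prod_range_succ _ _

private lemma Dodd_pos (n : ℕ) : 0 < Dodd n := Finset.prod_pos (fun i _ => by positivity)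

private lemma pow_succ_le (n : ℕ) (hn : 1 ≤ n) :
    ((n:ℝ)+1)^n ≤ Real.exp 1 * (n:ℝ)^n := by
  have hn0 : (0:ℝ) < n := by exact_mod_cast hn
  have h1 : ((n:ℝ)+1) ≤ Real.exp (1/n) * n := by
    have h := Real.add_one_le_exp (1/(n:ℝ))
    have h2 : (1/(n:ℝ) + 1) * n ≤ Real.exp (1/(n:ℝ)) * n :=
      mul_le_mul_of_nonneg_right h hn0.le
    have h3 : (1/(n:ℝ) + 1) * n = n + 1 := by field_simp; ring
    linarith
  calc ((n:ℝ)+1)^n ≤ (Real.exp (1/n) * n)^n := pow_le_pow_left₀ (by positivity) h1 n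
    _ = Real.exp (1/n)^n * (n:ℝ)^n := mul_pow _ _ _
    _ = Real.exp 1 * (n:ℝ)^n := by
        rw [← Real.exp_nat_mul]
        congr 2
        field_simp

private lemma Dodd_lb : ∀ n : ℕ, ((2*(n:ℝ))/3)^n ≤ (Dodd n : ℝ) := by
  intro n
  induction n with
  | zero => simp [Dodd]
  | succ n ih =>
    rcases le_or_gt n 4 with h | h
    · interval_cases n <;> norm_num [Dodd, Finset.prod_range_succ]
    · have hn5 : (5:ℝ) ≤ n := by exact_mod_cast h
      have hp := pow_succ_le n (by omega)
      have hD : (Dodd (n+1) : ℝ) = (Dodd n : ℝ) * (2*(n:ℝ)+1) := by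
        rw [Dodd_succ]; push_cast; ring
      have hexp : Real.exp 1 ≤ 2.7182818286 := le_of_lt Real.exp_one_lt_d9
      have hcast : ((n:ℕ)+1 : ℝ) = ((n+1 : ℕ) : ℝ) := by push_cast; ring
      rw [hD]
      push_cast
      have h1 : ((2*((n:ℝ)+1))/3)^(n+1)
          = ((2*((n:ℝ)+1))/3) * ((2/3:ℝ)^n * ((n:ℝ)+1)^n) := by
        rw [pow_succ']
        congr 1
        rw [← mul_pow]
        congr 1
        ring
      have h3 : ((2:ℝ)/3)^n * ((n:ℝ)^n) = ((2*(n:ℝ))/3)^n := by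
        rw [← mul_pow]; congr 1; ring
      have h4 : ((2*((n:ℝ)+1))/3) * Real.exp 1 ≤ 2*(n:ℝ)+1 := by
        nlinarith [Real.exp_pos 1]
      calc ((2*((n:ℝ)+1))/3)^(n+1)
          = ((2*((n:ℝ)+1))/3) * ((2/3:ℝ)^n * ((n:ℝ)+1)^n) := h1
        _ ≤ ((2*((n:ℝ)+1))/3) * ((2/3:ℝ)^n * (Real.exp 1 * (n:ℝ)^n)) := by
            apply mul_le_mul_of_nonneg_left _ (by positivity)
            exact mul_le_mul_of_nonneg_left hp (by positivity)
        _ = (((2*((n:ℝ)+1))/3) * Real.exp 1) * ((2*(n:ℝ))/3)^n := by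
            rw [← h3]; ring
        _ ≤ (2*(n:ℝ)+1) * ((2*(n:ℝ))/3)^n := mul_le_mul_of_nonneg_right h4 (by positivity)
        _ ≤ (2*(n:ℝ)+1) * (Dodd n : ℝ) := mul_le_mul_of_nonneg_left ih (by positivity)
        _ = (Dodd n : ℝ) * (2*(n:ℝ)+1) := by ring


private lemma exp_third : Real.exp (1/3 : ℝ) ≤ 2 := by
  have h1 : Real.exp (1/3:ℝ)^(3:ℕ) = Real.exp 1 := by
    rw [← Real.exp_nat_mul]; norm_num
  have h2 : Real.exp (1/3:ℝ)^(3:ℕ) ≤ 2^(3:ℕ) := by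
    rw [h1]; nlinarith [Real.exp_one_lt_d9]
  exact le_of_pow_le_pow_left₀ (by norm_num) (by norm_num) h2

private lemma star (m r : ℕ) (hm : 1 ≤ m) (hr : 1 ≤ r) :
    ((2*(m:ℝ)+1)/9)^(m+r) ≤ (Dodd m : ℝ) * (Dodd r : ℝ) := by
  have hm1 : (1:ℝ) ≤ m := by exact_mod_cast hm
  have hr1 : (1:ℝ) ≤ r := by exact_mod_cast hr
  set v : ℝ := (2*(m:ℝ)+1)/9 with hv
  have hv0 : 0 < v := by rw [hv]; positivity
  have hA : v^m * 2^m ≤ (Dodd m : ℝ) := by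
    have h1 : v * 2 ≤ 2*(m:ℝ)/3 := by rw [hv]; nlinarith
    calc v^m * 2^m = (v*2)^m := (mul_pow _ _ _).symm
      _ ≤ ((2*(m:ℝ))/3)^m := pow_le_pow_left₀ (by positivity) h1 m
      _ ≤ (Dodd m : ℝ) := Dodd_lb m
  have hB : v^r ≤ 2^m * (Dodd r : ℝ) := by
    have hkey : ((2*(m:ℝ)+1)/(6*(r:ℝ)))^r ≤ 2^m := by
      set t : ℝ := (2*(m:ℝ)+1)/(6*(r:ℝ)) with htd
      have ht0 : 0 < t := by rw [htd]; positivity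
      have h1 : t ≤ Real.exp (t - 1) := by
        have := Real.add_one_le_exp (t-1); linarith
      have h2 : t^r ≤ Real.exp (t-1)^r := pow_le_pow_left₀ ht0.le h1 r
      have h3 : Real.exp (t-1)^r = Real.exp ((r:ℝ)*(t-1)) := (Real.exp_nat_mul _ r).symm
      have hrt : (r:ℝ)*t = (2*(m:ℝ)+1)/6 := by
        rw [htd]; field_simp
      have h4 : (r:ℝ)*(t-1) ≤ (m:ℝ)/3 := by nlinarith
      have h5 : Real.exp ((m:ℝ)/3) ≤ 2^m := by
        have he : Real.exp ((m:ℝ)/3) = Real.exp (1/3:ℝ)^m := by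
          rw [← Real.exp_nat_mul]; congr 1; ring
        rw [he]
        exact pow_le_pow_left₀ (Real.exp_pos _).le exp_third m
      calc t^r ≤ Real.exp ((r:ℝ)*(t-1)) := by rw [← h3]; exact h2
        _ ≤ Real.exp ((m:ℝ)/3) := Real.exp_le_exp.mpr h4
        _ ≤ 2^m := h5
    have hsplit : v^r = ((2*(r:ℝ))/3)^r * ((2*(m:ℝ)+1)/(6*(r:ℝ)))^r := by
      rw [← mul_pow]; congr 1; rw [hv]; field_simp; ring
    calc v^r = ((2*(r:ℝ))/3)^r * ((2*(m:ℝ)+1)/(6*(r:ℝ)))^r := hsplit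
      _ ≤ ((2*(r:ℝ))/3)^r * 2^m := mul_le_mul_of_nonneg_left hkey (by positivity)
      _ ≤ (Dodd r : ℝ) * 2^m := mul_le_mul_of_nonneg_right (Dodd_lb r) (by positivity)
      _ = 2^m * (Dodd r : ℝ) := by ring
  have hfin : v^(m+r) * 2^m ≤ ((Dodd m : ℝ) * (Dodd r : ℝ)) * 2^m := by
    calc v^(m+r) * 2^m = (v^m * 2^m) * v^r := by rw [pow_add]; ring
      _ ≤ (Dodd m : ℝ) * (2^m * (Dodd r : ℝ)) := by
          apply mul_le_mul hA hB (by positivity) (by positivity)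
      _ = ((Dodd m : ℝ) * (Dodd r : ℝ)) * 2^m := by ring
  exact le_of_mul_le_mul_right hfin (by positivity)

private lemma half_prod (t : ℕ) (Y : ℝ) :
    ∏ i ∈ Finset.range t, (((i:ℝ) + 1/2) * Y) = (Dodd t:ℝ)/2^t * Y^t := by
  induction t with
  | zero => simp [Dodd]
  | succ t ih =>
    rw [Finset.prod_range_succ, ih, Dodd_succ]
    push_cast
    field_simp
    ring

private lemma left_prod (a : ℕ) (Y : ℝ) :
    ∏ i ∈ Finset.range a, ((((a - i : ℕ)):ℝ) - 1/2) * Y = (Dodd a:ℝ)/2^a * Y^a := by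
  have h1 : ∏ i ∈ Finset.range a, (((((a - i : ℕ)):ℝ) - 1/2) * Y)
      = ∏ i ∈ Finset.range a, (fun j : ℕ => ((j:ℝ) + 1/2) * Y) (a - 1 - i) := by
    apply Finset.prod_congr rfl
    intro i hi
    have hia : i < a := Finset.mem_range.mp hi
    have h2 : (a - i : ℕ) = (a - 1 - i) + 1 := by omega
    rw [h2]
    push_cast
    ring
  rw [h1, Finset.prod_range_reflect (fun j : ℕ => ((j:ℝ) + 1/2) * Y) a]
  exact half_prod a Y

private lemma refl_prodN (k : ℕ) : ∏ n ∈ Finset.Icc 1 k, (2*(k-n)+1) = Dodd k := by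
  rw [← Finset.Ico_add_one_right_eq_Icc, Finset.prod_Ico_eq_prod_range,
    show Dodd k = ∏ i ∈ Finset.range k, (2*i+1) from rfl,
    ← Finset.prod_range_reflect (fun i => 2*i+1) k]
  simp only [Nat.add_sub_cancel]
  apply Finset.prod_congr rfl
  intro i hi
  have : i < k := Finset.mem_range.mp hi
  congr 1
  omega
private lemma opp (x y : ℤ) (h : x*y < 0) (a : ℕ) (ha : 1 ≤ a) :
    max |x| |y| ≤ |x - (a:ℤ)*y| := by
  have ha' : (1:ℤ) ≤ (a:ℤ) := by exact_mod_cast ha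
  rcases lt_trichotomy x 0 with hx | hx | hx
  · have hy : 0 < y := by nlinarith
    have h1 : x - (a:ℤ)*y < 0 := by nlinarith
    rw [abs_of_neg hx, abs_of_pos hy, abs_of_neg h1]
    apply max_le <;> nlinarith
  · simp [hx] at h
  · have hy : y < 0 := by nlinarith
    have h1 : 0 < x - (a:ℤ)*y := by nlinarith
    rw [abs_of_pos hx, abs_of_neg hy, abs_of_pos h1]
    apply max_le <;> nlinarith

private lemma key (k p : ℕ) (hk : 1 ≤ k) (hp : k + 1 ≤ p) (x y : ℤ)
    (hx : 0 < x) (hy : 0 < y) (h0 : ∀ n : ℕ, n ≤ k → x - (n:ℤ)*y ≠ 0)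
    (hxp : x - (p:ℤ)*y ≠ 0) :
    ((max |x| |y| : ℤ) : ℝ)^(k+1) ≤
      9^(k+1) * (|(x:ℝ) - (p:ℝ)*(y:ℝ)| * |(x:ℝ)| * ∏ n ∈ Finset.Icc 1 k, |(x:ℝ) - (n:ℝ)*(y:ℝ)|) := by
  have hX0 : (0:ℝ) < (x:ℝ) := by exact_mod_cast hx
  have hY0 : (0:ℝ) < (y:ℝ) := by exact_mod_cast hy
  have hMcast : ((max |x| |y| : ℤ) : ℝ) = max (x:ℝ) (y:ℝ) := by
    rw [abs_of_pos hx, abs_of_pos hy]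
    exact_mod_cast Int.cast_max
  have hpR : ((k:ℝ)+1) ≤ (p:ℝ) := by exact_mod_cast hp
  have hpf : (1:ℝ) ≤ |(x:ℝ) - (p:ℝ)*(y:ℝ)| := by
    have := Int.one_le_abs hxp
    have h2 : ((|x - (p:ℤ)*y| : ℤ) : ℝ) = |(x:ℝ) - (p:ℝ)*(y:ℝ)| := by push_cast; ring_nf
    rw [← h2]; exact_mod_cast this
  -- get nearest integer
  obtain ⟨mn, hX1, hX2⟩ : ∃ mn : ℕ,
      ((mn:ℝ) - 1/2) * (y:ℝ) ≤ (x:ℝ) ∧ (x:ℝ) ≤ ((mn:ℝ) + 1/2) * (y:ℝ) := by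
    set m : ℤ := round ((x:ℝ)/(y:ℝ)) with hm
    have hround := abs_le.mp (abs_sub_round ((x:ℝ)/(y:ℝ)))
    have hθY : ((x:ℝ)/(y:ℝ)) * (y:ℝ) = (x:ℝ) := div_mul_cancel₀ _ hY0.ne'
    have hX1 : ((m:ℝ) - 1/2) * y ≤ (x:ℝ) := by
      have h1 : (m:ℝ) - 1/2 ≤ (x:ℝ)/(y:ℝ) := by linarith [hround.2]
      calc ((m:ℝ) - 1/2) * y ≤ ((x:ℝ)/(y:ℝ)) * y := mul_le_mul_of_nonneg_right h1 hY0.le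
        _ = (x:ℝ) := hθY
    have hX2 : (x:ℝ) ≤ ((m:ℝ) + 1/2) * y := by
      have h1 : (x:ℝ)/(y:ℝ) ≤ (m:ℝ) + 1/2 := by linarith [hround.1]
      calc (x:ℝ) = ((x:ℝ)/(y:ℝ)) * y := hθY.symm
        _ ≤ ((m:ℝ) + 1/2) * y := mul_le_mul_of_nonneg_right h1 hY0.le
    have hm0 : 0 ≤ m := by
      by_contra hneg
      push_neg at hneg
      have : (m:ℝ) ≤ -1 := by exact_mod_cast (by omega : m ≤ -1)
      nlinarith
    refine ⟨m.toNat, ?_, ?_⟩ <;>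
      · have hc : ((m.toNat : ℕ) : ℝ) = (m:ℝ) := by
          exact_mod_cast congrArg (Int.cast : ℤ → ℝ) (Int.toNat_of_nonneg hm0)
        rw [hc]
        assumption
  rcases Nat.lt_or_ge k mn with hcase | hcase
  · -- Case B : mn ≥ k+1, so x ≥ (k+1/2) y
    have hkm : (k:ℝ) + 1 ≤ (mn:ℝ) := by exact_mod_cast hcase
    have hY2X : (2*(k:ℝ)+1) * y ≤ 2 * x := by nlinarith
    have hk1 : (1:ℝ) ≤ (k:ℝ) := by exact_mod_cast hk
    have hMX : ((max |x| |y| : ℤ):ℝ) = (x:ℝ) := by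
      rw [hMcast]; apply max_eq_left
      nlinarith [mul_nonneg (by linarith : (0:ℝ) ≤ (k:ℝ)-1) hY0.le]
    have hprodN : ∏ n ∈ Finset.Icc 1 k, ((2*(k-n)+1 : ℕ):ℝ) = (Dodd k : ℝ) := by
      rw [← Nat.cast_prod, refl_prodN]
    have hbound : ∀ n ∈ Finset.Icc 1 k,
        ((2*(k-n)+1:ℕ):ℝ) * ((x:ℝ)/(2*(k:ℝ)+1)) ≤ |(x:ℝ) - (n:ℝ)*(y:ℝ)| := by
      intro n hn
      obtain ⟨hn1, hn2⟩ := Finset.mem_Icc.mp hn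
      have hnR : (n:ℝ) ≤ (k:ℝ) := by exact_mod_cast hn2
      have hnR0 : (0:ℝ) ≤ (n:ℝ) := by positivity
      have hc : ((2*(k-n)+1:ℕ):ℝ) = 2*((k:ℝ)-(n:ℝ))+1 := by
        push_cast [Nat.cast_sub hn2]; ring
      refine le_trans ?_ (le_abs_self _)
      rw [hc, mul_comm, div_mul_eq_mul_div, div_le_iff₀ (by positivity)]
      nlinarith [mul_le_mul_of_nonneg_left hY2X hnR0]
    have hprodLB : (Dodd k:ℝ) * ((x:ℝ)/(2*(k:ℝ)+1))^k
        ≤ ∏ n ∈ Finset.Icc 1 k, |(x:ℝ) - (n:ℝ)*(y:ℝ)| := by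
      calc (Dodd k:ℝ) * ((x:ℝ)/(2*(k:ℝ)+1))^k
          = ∏ n ∈ Finset.Icc 1 k, (((2*(k-n)+1:ℕ):ℝ) * ((x:ℝ)/(2*(k:ℝ)+1))) := by
            rw [Finset.prod_mul_distrib, hprodN, Finset.prod_const, Nat.card_Icc,
              Nat.add_sub_cancel]
        _ ≤ _ := Finset.prod_le_prod (fun n _ => by positivity) hbound
    have hcoef : (2*(k:ℝ)+1)^k ≤ 9^(k+1) * (Dodd k : ℝ) := by
      calc (2*(k:ℝ)+1)^k ≤ (6*(k:ℝ))^k := pow_le_pow_left₀ (by positivity) (by linarith) k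
        _ = 9^k * ((2*(k:ℝ))/3)^k := by rw [← mul_pow]; congr 1; ring
        _ ≤ 9^k * (Dodd k : ℝ) := mul_le_mul_of_nonneg_left (Dodd_lb k) (by positivity)
        _ ≤ 9^(k+1) * (Dodd k : ℝ) := by
            apply mul_le_mul_of_nonneg_right _ (by positivity)
            exact pow_le_pow_right₀ (by norm_num) (Nat.le_succ k)
    have hXconv : (x:ℝ)^(k+1) = (2*(k:ℝ)+1)^k * ((x:ℝ) * ((x:ℝ)/(2*(k:ℝ)+1))^k) := by
      rw [div_pow]
      field_simp
      ring
    calc ((max |x| |y| : ℤ):ℝ)^(k+1) = (x:ℝ)^(k+1) := by rw [hMX]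
      _ = (2*(k:ℝ)+1)^k * ((x:ℝ) * ((x:ℝ)/(2*(k:ℝ)+1))^k) := hXconv
      _ ≤ (9^(k+1) * (Dodd k : ℝ)) * ((x:ℝ) * ((x:ℝ)/(2*(k:ℝ)+1))^k) :=
          mul_le_mul_of_nonneg_right hcoef (by positivity)
      _ = 9^(k+1) * (1 * (x:ℝ) * ((Dodd k:ℝ) * ((x:ℝ)/(2*(k:ℝ)+1))^k)) := by ring
      _ ≤ 9^(k+1) * (|(x:ℝ) - (p:ℝ)*(y:ℝ)| * |(x:ℝ)| * ∏ n ∈ Finset.Icc 1 k, |(x:ℝ) - (n:ℝ)*(y:ℝ)|) := by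
          apply mul_le_mul_of_nonneg_left _ (by positivity)
          apply mul_le_mul (mul_le_mul hpf (le_abs_self _) hX0.le (by linarith)) hprodLB
            (by positivity) (by positivity)
  · -- Case A : mn ≤ k
    rcases Nat.eq_zero_or_pos mn with rfl | hmn1
    · -- mn = 0 : x ≤ y/2
      have hXY : (x:ℝ) ≤ (y:ℝ)/2 := by push_cast at hX2; linarith
      have hM : ((max |x| |y| : ℤ):ℝ) = (y:ℝ) := by
        rw [hMcast]; exact max_eq_right (by linarith)
      have hk1 : (1:ℝ) ≤ (k:ℝ) := by exact_mod_cast hk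
      have hXge1 : (1:ℝ) ≤ |(x:ℝ)| := by
        rw [abs_of_pos hX0]; exact_mod_cast hx
      have hbound : ∀ n ∈ Finset.Icc 1 k, (y:ℝ)/2 ≤ |(x:ℝ) - (n:ℝ)*(y:ℝ)| := by
        intro n hn
        obtain ⟨hn1, _⟩ := Finset.mem_Icc.mp hn
        have hnR : (1:ℝ) ≤ (n:ℝ) := by exact_mod_cast hn1
        refine le_trans ?_ (neg_le_abs _)
        nlinarith
      have hpb : (y:ℝ)/2 ≤ |(x:ℝ) - (p:ℝ)*(y:ℝ)| := by
        refine le_trans ?_ (neg_le_abs _)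
        nlinarith
      calc ((max |x| |y| : ℤ):ℝ)^(k+1) = (y:ℝ)^(k+1) := by rw [hM]
        _ ≤ (9*((y:ℝ)/2))^(k+1) := pow_le_pow_left₀ hY0.le (by linarith) _
        _ = 9^(k+1) * ((y:ℝ)/2 * 1 * ∏ n ∈ Finset.Icc 1 k, ((y:ℝ)/2)) := by
            rw [Finset.prod_const, Nat.card_Icc, Nat.add_sub_cancel, mul_pow]
            ring
        _ ≤ 9^(k+1) * (|(x:ℝ) - (p:ℝ)*(y:ℝ)| * |(x:ℝ)| * ∏ n ∈ Finset.Icc 1 k, |(x:ℝ) - (n:ℝ)*(y:ℝ)|) := by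
            apply mul_le_mul_of_nonneg_left _ (by positivity)
            apply mul_le_mul (mul_le_mul hpb hXge1 (by norm_num) (by positivity))
              (Finset.prod_le_prod (fun n _ => by positivity) hbound)
              (by positivity) (by positivity)
    · -- 1 ≤ mn ≤ k
      obtain ⟨a, rfl⟩ : ∃ a, mn = a + 1 := ⟨mn - 1, by omega⟩
      obtain ⟨b, rfl⟩ : ∃ b, k = (a+1) + b := ⟨k - (a+1), by omega⟩
      push_cast at hX1 hX2
      have haR : (0:ℝ) ≤ (a:ℝ) := by positivity
      have hbR : (0:ℝ) ≤ (b:ℝ) := by positivity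
      have hpR' : ((a:ℝ)+1+(b:ℝ)+1) ≤ (p:ℝ) := by
        have : ((a+1+b+1 : ℕ):ℝ) ≤ (p:ℝ) := by exact_mod_cast hp
        push_cast at this; linarith
      -- split product
      have hsplit : ∏ n ∈ Finset.Icc 1 (a+1+b), |(x:ℝ) - (n:ℝ)*(y:ℝ)|
          = (∏ n ∈ Finset.Ico 1 (a+1), |(x:ℝ) - (n:ℝ)*(y:ℝ)|) *
            (|(x:ℝ) - ((a+1:ℕ):ℝ)*(y:ℝ)| *
              ∏ n ∈ Finset.Ico (a+2) (a+1+b+1), |(x:ℝ) - (n:ℝ)*(y:ℝ)|) := by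
        rw [← Finset.Ico_add_one_right_eq_Icc,
          ← Finset.prod_Ico_consecutive (fun n : ℕ => |(x:ℝ) - (n:ℝ)*(y:ℝ)|)
            (show 1 ≤ a+1 by omega) (show a+1 ≤ (a+1+b)+1 by omega),
          Finset.prod_eq_prod_Ico_succ_bot (show a+1 < (a+1+b)+1 by omega)]
      -- piece bounds
      have hLft : (Dodd a : ℝ)/2^a * (y:ℝ)^a
          ≤ ∏ n ∈ Finset.Ico 1 (a+1), |(x:ℝ) - (n:ℝ)*(y:ℝ)| := by
        rw [Finset.prod_Ico_eq_prod_range, Nat.add_sub_cancel]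
        rw [← left_prod a (y:ℝ)]
        apply Finset.prod_le_prod
        · intro i hi
          have hia : i < a := Finset.mem_range.mp hi
          have hc : ((a - i : ℕ):ℝ) = (a:ℝ) - (i:ℝ) := by
            exact_mod_cast Nat.cast_sub (by omega : i ≤ a)
          have hiR : (i:ℝ) ≤ (a:ℝ) - 1 := by
            have : ((i:ℕ):ℝ) ≤ ((a-1 : ℕ):ℝ) := by exact_mod_cast (by omega : i ≤ a - 1)
            have h2 : ((a-1:ℕ):ℝ) = (a:ℝ) - 1 := by
              exact_mod_cast Nat.cast_sub (by omega : 1 ≤ a)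
            linarith [h2 ▸ this]
          rw [hc]
          nlinarith
        · intro i hi
          have hia : i < a := Finset.mem_range.mp hi
          have hc : ((a - i : ℕ):ℝ) = (a:ℝ) - (i:ℝ) := by
            exact_mod_cast Nat.cast_sub (by omega : i ≤ a)
          refine le_trans ?_ (le_abs_self _)
          rw [hc]
          push_cast
          nlinarith
      have hRgt : (Dodd b : ℝ)/2^b * (y:ℝ)^b
          ≤ ∏ n ∈ Finset.Ico (a+2) (a+1+b+1), |(x:ℝ) - (n:ℝ)*(y:ℝ)| := by
        rw [Finset.prod_Ico_eq_prod_range, show (a+1+b+1) - (a+2) = b by omega]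
        rw [← half_prod b (y:ℝ)]
        apply Finset.prod_le_prod
        · intro i hi; positivity
        · intro i hi
          refine le_trans ?_ (neg_le_abs _)
          push_cast
          nlinarith
      have hDrop : (1:ℝ) ≤ |(x:ℝ) - ((a+1:ℕ):ℝ)*(y:ℝ)| := by
        have h := h0 (a+1) (by omega)
        have h1 : (1:ℤ) ≤ |x - ((a+1:ℕ):ℤ)*y| := Int.one_le_abs h
        have h2 : ((|x - ((a+1:ℕ):ℤ)*y| : ℤ):ℝ) = |(x:ℝ) - ((a+1:ℕ):ℝ)*(y:ℝ)| := by
          push_cast; ring_nf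
        rw [← h2]; exact_mod_cast h1
      have hAbsX : ((a:ℝ) + 1/2) * (y:ℝ) ≤ |(x:ℝ)| := by
        rw [abs_of_pos hX0]; linarith
      have hPb : ((b:ℝ) + 1/2) * (y:ℝ) ≤ |(x:ℝ) - (p:ℝ)*(y:ℝ)| := by
        refine le_trans ?_ (neg_le_abs _)
        nlinarith
      have hMle : ((max |x| |y| : ℤ):ℝ) ≤ ((2*(a:ℝ)+3)/2) * (y:ℝ) := by
        rw [hMcast]
        apply max_le
        · linarith
        · nlinarith
      have hstar : ((2*(a:ℝ)+3)/9)^(a+1+b+1) ≤ (Dodd (a+1) : ℝ) * (Dodd (b+1) : ℝ) := by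
        have h := star (a+1) (b+1) (by omega) (by omega)
        have he : (a+1) + (b+1) = a+1+b+1 := by omega
        rw [he] at h
        have hb2 : (2*((a+1:ℕ):ℝ)+1)/9 = (2*(a:ℝ)+3)/9 := by push_cast; ring
        rwa [hb2] at h
      calc ((max |x| |y| : ℤ):ℝ)^(a+1+b+1)
          ≤ (((2*(a:ℝ)+3)/2) * (y:ℝ))^(a+1+b+1) :=
            pow_le_pow_left₀ (by positivity) hMle _
        _ = ((9:ℝ)/2*(y:ℝ))^(a+1+b+1) * ((2*(a:ℝ)+3)/9)^(a+1+b+1) := by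
            rw [← mul_pow]; congr 1; ring
        _ ≤ ((9:ℝ)/2*(y:ℝ))^(a+1+b+1) * ((Dodd (a+1) : ℝ) * (Dodd (b+1) : ℝ)) :=
            mul_le_mul_of_nonneg_left hstar (by positivity)
        _ = 9^(a+1+b+1) * ((((b:ℝ)+1/2)*(y:ℝ)) * (((a:ℝ)+1/2)*(y:ℝ)) *
              ((Dodd a : ℝ)/2^a * (y:ℝ)^a * (1 * ((Dodd b : ℝ)/2^b * (y:ℝ)^b)))) := by
            rw [Dodd_succ a, Dodd_succ b]
            push_cast
            rw [show a+1+b+1 = (a+b)+2 by omega]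
            rw [pow_add, pow_add, pow_add, pow_add]
            field_simp
            rw [div_pow, div_pow]
            field_simp
            rw [mul_pow, mul_pow]; ring
        _ ≤ 9^(a+1+b+1) * (|(x:ℝ) - (p:ℝ)*(y:ℝ)| * |(x:ℝ)| *
              ((∏ n ∈ Finset.Ico 1 (a+1), |(x:ℝ) - (n:ℝ)*(y:ℝ)|) *
               (|(x:ℝ) - ((a+1:ℕ):ℝ)*(y:ℝ)| *
                ∏ n ∈ Finset.Ico (a+2) (a+1+b+1), |(x:ℝ) - (n:ℝ)*(y:ℝ)|))) := by
            apply mul_le_mul_of_nonneg_left _ (by positivity)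
            apply mul_le_mul
              (mul_le_mul hPb hAbsX (by positivity) (by positivity))
              (mul_le_mul hLft (mul_le_mul hDrop hRgt (by positivity) (by positivity))
                (by positivity) (by positivity))
              (by positivity) (by positivity)
        _ = 9^(a+1+b+1) * (|(x:ℝ) - (p:ℝ)*(y:ℝ)| * |(x:ℝ)| *
              ∏ n ∈ Finset.Icc 1 (a+1+b), |(x:ℝ) - (n:ℝ)*(y:ℝ)|) := by
            rw [hsplit]
/-- For d ≥ 5, a prime p ≥ d − 1, and (x,y) ∈ ℤ² with L(x,y) ≠ 0 where
L(X,Y) = (X − pY)·X·∏_{n=1}^{d−2}(X − nY), one has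
max{|x|,|y|} ≤ 9·|L(x,y)|^{1/(d−1)}. -/
theorem stmt_18 (d : ℕ) (hd : 5 ≤ d) (p : ℕ) (hp : p.Prime) (hpd : d - 1 ≤ p)
    (x y : ℤ)
    (hL : (x - (p : ℤ) * y) * x * ∏ n ∈ Finset.Icc 1 (d - 2), (x - (n : ℤ) * y) ≠ 0) :
    ((max |x| |y| : ℤ) : ℝ) ≤
      9 * ((|(x - (p : ℤ) * y) * x * ∏ n ∈ Finset.Icc 1 (d - 2), (x - (n : ℤ) * y)| : ℤ) : ℝ) ^
        ((1 : ℝ) / ((d : ℝ) - 1)) := by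
  obtain ⟨k, rfl⟩ : ∃ k, d = k + 2 := ⟨d - 2, by omega⟩
  have hk : 3 ≤ k := by omega
  have hk1 : 1 ≤ k := by omega
  have hpk : k + 1 ≤ p := by omega
  simp only [show k + 2 - 2 = k from rfl] at hL ⊢
  -- nonzero factors
  rw [mul_ne_zero_iff, mul_ne_zero_iff] at hL
  obtain ⟨⟨hxp, hx0⟩, hprod0⟩ := hL
  have h3' : ∀ n ∈ Finset.Icc 1 k, x - (n:ℤ)*y ≠ 0 := Finset.prod_ne_zero_iff.mp hprod0
  have h0 : ∀ n : ℕ, n ≤ k → x - (n:ℤ)*y ≠ 0 := by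
    intro n hn
    rcases Nat.eq_zero_or_pos n with rfl | hn1
    · simpa using hx0
    · exact h3' n (Finset.mem_Icc.mpr ⟨hn1, hn⟩)
  -- the main power inequality
  have H : ((max |x| |y| : ℤ) : ℝ)^(k+1) ≤
      9^(k+1) * (|(x:ℝ) - (p:ℝ)*(y:ℝ)| * |(x:ℝ)| * ∏ n ∈ Finset.Icc 1 k, |(x:ℝ) - (n:ℝ)*(y:ℝ)|) := by
    rcases lt_trichotomy y 0 with hy | hy | hy
    · rcases lt_trichotomy x 0 with hx | hx | hx
      · -- both negative: apply key to (-x, -y)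
        have h0' : ∀ n : ℕ, n ≤ k → -x - (n:ℤ)*(-y) ≠ 0 := by
          intro n hn
          have := h0 n hn
          intro hc; apply this
          have : x - (n:ℤ)*y = -(-x - (n:ℤ)*(-y)) := by ring
          rw [this, hc]; ring
        have hxp' : -x - (p:ℤ)*(-y) ≠ 0 := by
          intro hc; apply hxp
          have : x - (p:ℤ)*y = -(-x - (p:ℤ)*(-y)) := by ring
          rw [this, hc]; ring
        have H' := key k p hk1 hpk (-x) (-y) (by omega) (by omega) h0' hxp'
        simp only [abs_neg] at H'
        push_cast at H'
        have e1 : |-(x:ℝ) - (p:ℝ)*(-(y:ℝ))| = |(x:ℝ) - (p:ℝ)*(y:ℝ)| := by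
          rw [show -(x:ℝ) - (p:ℝ)*(-(y:ℝ)) = -((x:ℝ) - (p:ℝ)*(y:ℝ)) by ring, abs_neg]
        have e2 : ∀ n : ℕ, |-(x:ℝ) - (n:ℝ)*(-(y:ℝ))| = |(x:ℝ) - (n:ℝ)*(y:ℝ)| := by
          intro n
          rw [show -(x:ℝ) - (n:ℝ)*(-(y:ℝ)) = -((x:ℝ) - (n:ℝ)*(y:ℝ)) by ring, abs_neg]
        rw [e1, abs_neg] at H'
        have e3 : ∏ n ∈ Finset.Icc 1 k, |-(x:ℝ) - (n:ℝ)*(-(y:ℝ))|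
            = ∏ n ∈ Finset.Icc 1 k, |(x:ℝ) - (n:ℝ)*(y:ℝ)| :=
          Finset.prod_congr rfl (fun n _ => e2 n)
        rw [e3] at H'
        exact_mod_cast H'
      · exact absurd hx hx0
      · -- x > 0, y < 0 : opposite signs
        have hxy : x * y < 0 := mul_neg_of_pos_of_neg hx hy
        have HZ : (max |x| |y|)^(k+1) ≤ |x - (p:ℤ)*y| * |x| * ∏ n ∈ Finset.Icc 1 k, |x - (n:ℤ)*y| := by
          have h1 : max |x| |y| ≤ |x - (p:ℤ)*y| := opp x y hxy p (by omega)
          have h2 : (1:ℤ) ≤ |x| := Int.one_le_abs hx0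
          have h3 : ∀ n ∈ Finset.Icc 1 k, max |x| |y| ≤ |x - (n:ℤ)*y| := fun n hn =>
            opp x y hxy n (Finset.mem_Icc.mp hn).1
          have hM0 : (0:ℤ) ≤ max |x| |y| := le_trans (abs_nonneg x) (le_max_left _ _)
          calc (max |x| |y|)^(k+1) = max |x| |y| * 1 * ∏ n ∈ Finset.Icc 1 k, max |x| |y| := by
                rw [Finset.prod_const, Nat.card_Icc, Nat.add_sub_cancel, pow_succ]
                ring
            _ ≤ |x - (p:ℤ)*y| * |x| * ∏ n ∈ Finset.Icc 1 k, |x - (n:ℤ)*y| := by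
                apply mul_le_mul (mul_le_mul h1 h2 (by norm_num) (abs_nonneg _))
                  (Finset.prod_le_prod (fun n _ => hM0) h3)
                  (Finset.prod_nonneg (fun n _ => hM0))
                  (mul_nonneg (abs_nonneg _) (abs_nonneg _))
        have := le_trans HZ (le_mul_of_one_le_left
          (by positivity) (one_le_pow₀ (by norm_num) : (1:ℤ) ≤ 9^(k+1)))
        calc ((max |x| |y| : ℤ) : ℝ)^(k+1)
            ≤ ((9^(k+1) * (|x - (p:ℤ)*y| * |x| * ∏ n ∈ Finset.Icc 1 k, |x - (n:ℤ)*y|) : ℤ) : ℝ) := by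
              exact_mod_cast this
          _ = 9^(k+1) * (|(x:ℝ) - (p:ℝ)*(y:ℝ)| * |(x:ℝ)| * ∏ n ∈ Finset.Icc 1 k, |(x:ℝ) - (n:ℝ)*(y:ℝ)|) := by
              push_cast
              ring
    · -- y = 0
      subst hy
      have h2 : (1:ℤ) ≤ |x| := Int.one_le_abs hx0
      have h2R : (1:ℝ) ≤ |(x:ℝ)| := by exact_mod_cast h2
      simp only [Int.cast_zero, mul_zero, sub_zero, abs_zero]
      rw [max_eq_left (abs_nonneg x), Finset.prod_const, Nat.card_Icc, Nat.add_sub_cancel]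
      have : ((|x| : ℤ):ℝ) = |(x:ℝ)| := by push_cast; ring
      rw [this]
      calc |(x:ℝ)|^(k+1) ≤ |(x:ℝ)|^(k+2) := pow_le_pow_right₀ h2R (by omega)
        _ = |(x:ℝ)| * |(x:ℝ)| * |(x:ℝ)|^k := by ring
        _ ≤ 9^(k+1) * (|(x:ℝ)| * |(x:ℝ)| * |(x:ℝ)|^k) := by
            apply le_mul_of_one_le_left (by positivity)
            exact one_le_pow₀ (by norm_num)
    · rcases lt_trichotomy x 0 with hx | hx | hx
      · -- x < 0, y > 0: opposite
        have hxy : x * y < 0 := mul_neg_of_neg_of_pos hx hy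
        have HZ : (max |x| |y|)^(k+1) ≤ |x - (p:ℤ)*y| * |x| * ∏ n ∈ Finset.Icc 1 k, |x - (n:ℤ)*y| := by
          have h1 : max |x| |y| ≤ |x - (p:ℤ)*y| := opp x y hxy p (by omega)
          have h2 : (1:ℤ) ≤ |x| := Int.one_le_abs hx0
          have h3 : ∀ n ∈ Finset.Icc 1 k, max |x| |y| ≤ |x - (n:ℤ)*y| := fun n hn =>
            opp x y hxy n (Finset.mem_Icc.mp hn).1
          have hM0 : (0:ℤ) ≤ max |x| |y| := le_trans (abs_nonneg x) (le_max_left _ _)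
          calc (max |x| |y|)^(k+1) = max |x| |y| * 1 * ∏ n ∈ Finset.Icc 1 k, max |x| |y| := by
                rw [Finset.prod_const, Nat.card_Icc, Nat.add_sub_cancel, pow_succ]
                ring
            _ ≤ |x - (p:ℤ)*y| * |x| * ∏ n ∈ Finset.Icc 1 k, |x - (n:ℤ)*y| := by
                apply mul_le_mul (mul_le_mul h1 h2 (by norm_num) (abs_nonneg _))
                  (Finset.prod_le_prod (fun n _ => hM0) h3)
                  (Finset.prod_nonneg (fun n _ => hM0))
                  (mul_nonneg (abs_nonneg _) (abs_nonneg _))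
        have := le_trans HZ (le_mul_of_one_le_left
          (by positivity) (one_le_pow₀ (by norm_num) : (1:ℤ) ≤ 9^(k+1)))
        calc ((max |x| |y| : ℤ) : ℝ)^(k+1)
            ≤ ((9^(k+1) * (|x - (p:ℤ)*y| * |x| * ∏ n ∈ Finset.Icc 1 k, |x - (n:ℤ)*y|) : ℤ) : ℝ) := by
              exact_mod_cast this
          _ = 9^(k+1) * (|(x:ℝ) - (p:ℝ)*(y:ℝ)| * |(x:ℝ)| * ∏ n ∈ Finset.Icc 1 k, |(x:ℝ) - (n:ℝ)*(y:ℝ)|) := by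
              push_cast
              ring
      · exact absurd hx hx0
      · exact key k p hk1 hpk x y hx hy h0 hxp
  -- convert and finish via rpow
  have hLabs : ((|(x - (p:ℤ)*y) * x * ∏ n ∈ Finset.Icc 1 k, (x - (n:ℤ)*y)| : ℤ) : ℝ)
      = |(x:ℝ) - (p:ℝ)*(y:ℝ)| * |(x:ℝ)| * ∏ n ∈ Finset.Icc 1 k, |(x:ℝ) - (n:ℝ)*(y:ℝ)| := by
    rw [abs_mul, abs_mul, Finset.abs_prod]
    push_cast
    ring
  rw [← hLabs] at H
  set B : ℝ := ((|(x - (p:ℤ)*y) * x * ∏ n ∈ Finset.Icc 1 k, (x - (n:ℤ)*y)| : ℤ) : ℝ) with hB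
  have hL0 : (x - (p:ℤ)*y) * x * ∏ n ∈ Finset.Icc 1 k, (x - (n:ℤ)*y) ≠ 0 := by
    apply mul_ne_zero (mul_ne_zero hxp hx0) hprod0
  have hB1 : (1:ℝ) ≤ B := by
    rw [hB]; exact_mod_cast Int.one_le_abs hL0
  have hB0 : (0:ℝ) ≤ B := by linarith
  have hexp : ((k+2 : ℕ):ℝ) - 1 = ((k:ℝ)+1) := by push_cast; ring
  rw [hexp]
  have hne : ((k:ℝ)+1) ≠ 0 := by positivity
  have hpow : (9 * B ^ ((1:ℝ)/((k:ℝ)+1)))^(k+1) = 9^(k+1) * B := by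
    rw [mul_pow]
    congr 1
    rw [← Real.rpow_natCast (B ^ ((1:ℝ)/((k:ℝ)+1))) (k+1), ← Real.rpow_mul hB0]
    rw [show (1:ℝ)/((k:ℝ)+1) * ((k+1 : ℕ):ℝ) = 1 by push_cast; field_simp]
    exact Real.rpow_one B
  apply le_of_pow_le_pow_left₀ (Nat.succ_ne_zero k) (by positivity)
  rw [hpow]
  exact H
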